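/- Let L be a finite distributive lattice with join-irreducible poset P, and let ≺, ≺' be two linearizations of the order on P. Then the corresponding maximal chains C_≺ and C_{≺'} in L have symmetric difference {a,b} of size two if and only if the sequences (p_1,...,p_{|P|}) and (p'_1,...,p'_{|P|}) determined by ≺ and ≺' differ by exchanging two consecutive elements; in that case {a,b} is a diamond pair, i.e., a ∨ b covers both a and b and both a and b cover a ∧ b. -/

import Mathlib

/-- The poset of join-irreducible elements of `L`. -/
abbrev JI (L : Type*) [Lattice L] := {p : L // SupIrred p}

/-- The Birkhoff order ideal of `a`, as a set of join-irreducibles. -/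
def bIdealSet {L : Type*} [Lattice L] (a : L) : Set (JI L) := {p | (p : L) ≤ a}

/-- The maximal chain `C_≺ ⊆ L` associated with a linearization `slt`. -/
def chainOf {L : Type*} [Lattice L] (slt : JI L → JI L → Prop) : Set L :=
  {a | ∀ ⦃p q : JI L⦄, p ∈ bIdealSet a → slt q p → q ∈ bIdealSet a}

section Birkhoff
variable {L : Type*} [DistribLattice L] [Fintype L] [OrderBot L]

lemma bIdeal_mono {x y : L} (h : x ≤ y) : bIdealSet x ⊆ bIdealSet y :=
  fun _ hp => le_trans hp h

lemma le_of_bIdeal_subset {x y : L} (h : bIdealSet x ⊆ bIdealSet y) : x ≤ y := by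
  obtain ⟨s, rfl, hs⟩ := exists_supIrred_decomposition x
  exact Finset.sup_le fun i hi => h (show (⟨i, hs hi⟩ : JI L) ∈ bIdealSet _ from
    Finset.le_sup (f := id) hi)

lemma le_iff_bIdeal {x y : L} : x ≤ y ↔ bIdealSet x ⊆ bIdealSet y :=
  ⟨bIdeal_mono, le_of_bIdeal_subset⟩

lemma bIdeal_inj {x y : L} (h : bIdealSet x = bIdealSet y) : x = y :=
  le_antisymm (le_of_bIdeal_subset h.le) (le_of_bIdeal_subset h.ge)

lemma bIdeal_sup (x y : L) : bIdealSet (x ⊔ y) = bIdealSet x ∪ bIdealSet y := by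
  ext p; exact p.2.supPrime.le_sup

lemma bIdeal_inf (x y : L) : bIdealSet (x ⊓ y) = bIdealSet x ∩ bIdealSet y := by
  ext p; exact le_inf_iff

lemma covby_of_bIdeal {x y : L} {p : JI L} (hp : p ∉ bIdealSet x)
    (h : bIdealSet y = insert p (bIdealSet x)) : x ⋖ y := by
  constructor
  · refine lt_of_le_of_ne (le_of_bIdeal_subset (h ▸ Set.subset_insert _ _)) ?_
    rintro rfl
    exact hp (h ▸ Set.mem_insert _ _)
  · intro z hxz hzy
    have h1 : bIdealSet x ⊆ bIdealSet z := bIdeal_mono hxz.le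
    have h2 : bIdealSet z ⊆ bIdealSet y := bIdeal_mono hzy.le
    by_cases hpz : p ∈ bIdealSet z
    · exact absurd (le_of_bIdeal_subset (x := y) (by rw [h]; exact Set.insert_subset hpz h1))
        (not_le_of_gt hzy)
    · have : bIdealSet z ⊆ bIdealSet x := fun q hq => by
        rcases h ▸ h2 hq with h' | h'
        · exact absurd (h' ▸ hq) hpz
        · exact h'
      exact absurd (le_of_bIdeal_subset this) (not_le_of_gt hxz)

end Birkhoff

set_option linter.unusedSectionVars false

lemma lower_finset_mem {n : ℕ} (T : Finset (Fin n))
    (hT : ∀ j k : Fin n, j ≤ k → k ∈ T → j ∈ T) (j : Fin n) : j ∈ T ↔ (j : ℕ) < T.card := by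
  constructor
  · intro hj
    have h1 : Finset.Iic j ⊆ T := fun k hk => hT k j (Finset.mem_Iic.1 hk) hj
    have := Finset.card_le_card h1
    rw [Fin.card_Iic] at this
    omega
  · intro hj
    by_contra hjT
    have h1 : T ⊆ Finset.Iio j := by
      intro k hk
      rw [Finset.mem_Iio]
      by_contra hk'
      exact hjT (hT j k (le_of_not_gt hk') hk)
    have := Finset.card_le_card h1
    rw [Fin.card_Iio] at this
    omega

section Pref
variable {L : Type*} [DistribLattice L] [Fintype L] [OrderBot L]
  [DecidablePred (SupIrred : L → Prop)]

/-- The prefix set of the first `i` join-irreducibles in the enumeration `e`. -/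
def prefA (e : Fin (Fintype.card (JI L)) ≃ JI L) (i : ℕ) : Set (JI L) :=
  {p | (e.symm p : ℕ) < i}

/-- The element of `L` whose Birkhoff ideal is `prefA e i`. -/
noncomputable def prefC (e : Fin (Fintype.card (JI L)) ≃ JI L) (i : ℕ) : L :=
  ((prefA e i).toFinite.toFinset).sup (↑·)

variable {slt : JI L → JI L → Prop} (h1 : IsStrictTotalOrder (JI L) slt)
  (h1' : ∀ p q : JI L, p < q → slt p q)
  (e : Fin (Fintype.card (JI L)) ≃ JI L)
  (he : ∀ i j, i < j → slt (e i) (e j))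

include h1 h1' he in
lemma idx_lt_of_slt {p q : JI L} (h : slt p q) : (e.symm p : ℕ) < (e.symm q : ℕ) := by
  have hirr := h1.toIsStrictOrder.toIrrefl.1
  have htrans := h1.toIsStrictOrder.toIsTrans.1
  by_contra hc
  push_neg at hc
  rcases eq_or_lt_of_le hc with heq | hlt
  · have hqp : q = p := by
      rw [← e.apply_symm_apply p, ← e.apply_symm_apply q]
      exact congrArg e (Fin.ext heq)
    exact hirr p (hqp ▸ h)
  · have h2 := he (e.symm q) (e.symm p) hlt
    simp only [Equiv.apply_symm_apply] at h2
    exact hirr p (htrans _ _ _ h h2)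

include h1 h1' he in
lemma idx_mono {p q : JI L} (h : (p : L) ≤ (q : L)) : (e.symm p : ℕ) ≤ (e.symm q : ℕ) := by
  rcases eq_or_ne p q with rfl | hne
  · exact le_rfl
  · exact (idx_lt_of_slt h1 h1' e he (h1' p q (lt_of_le_of_ne h (fun hc => hne (Subtype.ext (congrArg _ hc)))))).le

include h1 h1' he in
lemma bIdeal_prefC (i : ℕ) : bIdealSet (prefC e i) = prefA e i := by
  ext p
  constructor
  · intro hp
    obtain ⟨q, hq, hpq⟩ := p.2.supPrime.le_finset_sup.1 hp
    have hq' : q ∈ prefA e i := (Set.Finite.mem_toFinset _).1 hq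
    exact lt_of_le_of_lt (idx_mono h1 h1' e he hpq) hq'
  · intro hp
    exact Finset.le_sup ((Set.Finite.mem_toFinset _).2 hp)

lemma prefA_succ {i : ℕ} (hi : i < Fintype.card (JI L)) :
    prefA e (i + 1) = insert (e ⟨i, hi⟩) (prefA e i) := by
  ext p
  simp only [prefA, Set.mem_setOf_eq, Set.mem_insert_iff]
  rw [Nat.lt_succ_iff_lt_or_eq]
  constructor
  · rintro (h | h)
    · exact Or.inr h
    · refine Or.inl ?_
      rw [← e.apply_symm_apply p]
      exact congrArg e (Fin.ext h)
  · rintro (rfl | h)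
    · simp
    · exact Or.inl h

lemma not_mem_prefA {i : ℕ} (hi : i < Fintype.card (JI L)) : e ⟨i, hi⟩ ∉ prefA e i := by
  simp [prefA]

lemma prefA_zero : prefA e 0 = ∅ := by simp [prefA]

lemma prefA_card : prefA e (Fintype.card (JI L)) = Set.univ := by
  ext p; simp [prefA, (e.symm p).2]

lemma prefA_mono {i j : ℕ} (h : i ≤ j) : prefA e i ⊆ prefA e j :=
  fun p hp => lt_of_lt_of_le hp h

lemma ncard_prefA {i : ℕ} (hi : i ≤ Fintype.card (JI L)) : (prefA e i).ncard = i := by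
  induction i with
  | zero => simp [prefA_zero]
  | succ j ih =>
    rw [prefA_succ e (by omega), Set.ncard_insert_of_notMem (not_mem_prefA e _) (Set.toFinite _),
      ih (by omega)]

include h1 h1' he in
lemma chainOf_eq : chainOf slt = (fun i => prefC e i) '' Set.Iic (Fintype.card (JI L)) := by
  classical
  ext x
  constructor
  · intro hx
    set T : Finset (Fin (Fintype.card (JI L))) :=
      Finset.univ.filter (fun j => e j ∈ bIdealSet x) with hT
    have hTlow : ∀ j k : Fin (Fintype.card (JI L)), j ≤ k → k ∈ T → j ∈ T := by
      intro j k hjk hk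
      simp only [hT, Finset.mem_filter, Finset.mem_univ, true_and] at *
      rcases eq_or_lt_of_le hjk with rfl | hlt
      · exact hk
      · exact hx hk (he j k hlt)
    have hmem := lower_finset_mem T hTlow
    refine ⟨T.card, Set.mem_Iic.2 (le_trans (Finset.card_le_univ T) (by simp)), ?_⟩
    refine (bIdeal_inj ?_).symm
    show bIdealSet x = bIdealSet (prefC e T.card)
    rw [bIdeal_prefC h1 h1' e he]
    ext p
    have := hmem (e.symm p)
    simp only [hT, Finset.mem_filter, Finset.mem_univ, true_and, Equiv.apply_symm_apply] at this
    exact ⟨fun hp => this.1 hp, fun hp => this.2 hp⟩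
  · rintro ⟨i, -, rfl⟩
    intro p q hp hq
    simp only [bIdeal_prefC h1 h1' e he] at hp ⊢
    exact lt_trans (idx_lt_of_slt h1 h1' e he hq) hp

end Pref

section Two
variable {L : Type*} [DistribLattice L] [Fintype L] [OrderBot L]
  [DecidablePred (SupIrred : L → Prop)]
  {slt slt' : JI L → JI L → Prop}
  (h1 : IsStrictTotalOrder (JI L) slt) (h1' : ∀ p q : JI L, p < q → slt p q)
  (h2 : IsStrictTotalOrder (JI L) slt') (h2' : ∀ p q : JI L, p < q → slt' p q)
  (e e' : Fin (Fintype.card (JI L)) ≃ JI L)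
  (he : ∀ i j, i < j → slt (e i) (e j))
  (he' : ∀ i j, i < j → slt' (e' i) (e' j))

/-- The set of indices where the two prefix chains disagree. -/
def Dset (e e' : Fin (Fintype.card (JI L)) ≃ JI L) : Set ℕ :=
  {i | i ≤ Fintype.card (JI L) ∧ prefA e i ≠ prefA e' i}

include h1 h1' he h2 h2' he' in
lemma prefC_eq_iff {i j : ℕ} (hi : i ≤ Fintype.card (JI L)) (hj : j ≤ Fintype.card (JI L))
    (h : prefC e i = prefC e' j) : i = j ∧ prefA e i = prefA e' j := by
  have hA : prefA e i = prefA e' j := by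
    have := congrArg bIdealSet h
    rwa [bIdeal_prefC h1 h1' e he, bIdeal_prefC h2 h2' e' he'] at this
  refine ⟨?_, hA⟩
  rw [← ncard_prefA e hi, hA, ncard_prefA e' hj]

include h1 h1' he h2 h2' he' in
lemma ncard_symmDiff_two :
    (symmDiff (chainOf slt) (chainOf slt')).ncard = 2 * (Dset e e').ncard := by
  have hDfin : (Dset e e').Finite := (Set.finite_Iic (Fintype.card (JI L))).subset fun i hi => hi.1
  have hCC' : chainOf slt \ chainOf slt' = prefC e '' Dset e e' := by
    rw [chainOf_eq h1 h1' e he, chainOf_eq h2 h2' e' he']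
    ext x
    constructor
    · rintro ⟨⟨i, hi, rfl⟩, hx'⟩
      refine ⟨i, ⟨hi, fun hA => hx' ⟨i, hi, ?_⟩⟩, rfl⟩
      exact (bIdeal_inj (by rw [bIdeal_prefC h2 h2' e' he', bIdeal_prefC h1 h1' e he, hA])).symm
    · rintro ⟨i, ⟨hi, hA⟩, rfl⟩
      refine ⟨⟨i, hi, rfl⟩, ?_⟩
      rintro ⟨j, hj, hxj⟩
      obtain ⟨rfl, hA'⟩ := prefC_eq_iff h1 h1' h2 h2' e e' he he' hi hj hxj.symm
      exact hA hA'
  have hC'C : chainOf slt' \ chainOf slt = prefC e' '' Dset e e' := by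
    rw [chainOf_eq h1 h1' e he, chainOf_eq h2 h2' e' he']
    ext x
    constructor
    · rintro ⟨⟨i, hi, rfl⟩, hx'⟩
      refine ⟨i, ⟨hi, fun hA => hx' ⟨i, hi, ?_⟩⟩, rfl⟩
      exact (bIdeal_inj (by rw [bIdeal_prefC h1 h1' e he, bIdeal_prefC h2 h2' e' he', hA])).symm
    · rintro ⟨i, ⟨hi, hA⟩, rfl⟩
      refine ⟨⟨i, hi, rfl⟩, ?_⟩
      rintro ⟨j, hj, hxj⟩
      obtain ⟨rfl, hA'⟩ := prefC_eq_iff h2 h2' h1 h1' e' e he' he hi hj hxj.symm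
      exact hA hA'.symm
  have hdisj : Disjoint (prefC e '' Dset e e') (prefC e' '' Dset e e') := by
    rw [Set.disjoint_left]
    rintro x ⟨i, hi, rfl⟩ ⟨j, hj, hxj⟩
    obtain ⟨rfl, hA'⟩ := prefC_eq_iff h1 h1' h2 h2' e e' he he' hi.1 hj.1 hxj.symm
    exact hi.2 hA'
  have hinj : Set.InjOn (prefC e) (Dset e e') := fun i hi j hj hij =>
    (prefC_eq_iff h1 h1' h1 h1' e e he he hi.1 hj.1 hij).1
  have hinj' : Set.InjOn (prefC e') (Dset e e') := fun i hi j hj hij =>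
    (prefC_eq_iff h2 h2' h2 h2' e' e' he' he' hi.1 hj.1 hij).1
  rw [Set.symmDiff_def, hCC', hC'C,
    Set.ncard_union_eq hdisj (hDfin.image _) (hDfin.image _),
    Set.ncard_image_of_injOn hinj, Set.ncard_image_of_injOn hinj']
  omega

end Two

section Swap
variable {L : Type*} [DistribLattice L] [Fintype L] [OrderBot L]
  [DecidablePred (SupIrred : L → Prop)]
  (e e' : Fin (Fintype.card (JI L)) ≃ JI L)

lemma Dset_of_swap (i : Fin (Fintype.card (JI L))) (hi : (i : ℕ) + 1 < Fintype.card (JI L))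
    (hs1 : e' i = e ⟨(i : ℕ) + 1, hi⟩) (hs2 : e' ⟨(i : ℕ) + 1, hi⟩ = e i)
    (hrest : ∀ j, j ≠ i → j ≠ ⟨(i : ℕ) + 1, hi⟩ → e' j = e j) :
    Dset e e' = {(i : ℕ) + 1} := by
  have key : ∀ j : Fin (Fintype.card (JI L)), (e'.symm (e j) : ℕ) =
      if (j : ℕ) = i then (i : ℕ) + 1 else if (j : ℕ) = (i : ℕ) + 1 then i else j := by
    intro j
    by_cases hji : j = i
    · rw [hji, if_pos rfl, show e i = e' ⟨(i : ℕ) + 1, hi⟩ from hs2.symm,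
        Equiv.symm_apply_apply]
    · by_cases hji' : j = ⟨(i : ℕ) + 1, hi⟩
      · rw [hji', show e ⟨(i : ℕ) + 1, hi⟩ = e' i from hs1.symm, Equiv.symm_apply_apply,
          if_neg (by simp), if_pos rfl]
      · rw [show e j = e' j from (hrest j hji hji').symm, Equiv.symm_apply_apply,
          if_neg (fun h => hji (Fin.ext h)), if_neg (fun h => hji' (Fin.ext h))]
  have heqA : ∀ m : ℕ, m ≠ (i : ℕ) + 1 → prefA e m = prefA e' m := by
    intro m hm
    ext p
    show ((e.symm p : ℕ) < m) ↔ ((e'.symm p : ℕ) < m)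
    have hk := key (e.symm p)
    rw [Equiv.apply_symm_apply] at hk
    rw [hk]
    have := i.2
    split_ifs <;> omega
  have hne : prefA e ((i : ℕ) + 1) ≠ prefA e' ((i : ℕ) + 1) := by
    intro hEq
    have h1 : e ⟨(i : ℕ) + 1, hi⟩ ∈ prefA e' ((i : ℕ) + 1) := by
      show (e'.symm (e ⟨(i : ℕ) + 1, hi⟩) : ℕ) < (i : ℕ) + 1
      rw [key ⟨(i : ℕ) + 1, hi⟩]
      simp only [Fin.val_mk]
      split_ifs <;> omega
    rw [← hEq] at h1
    exact not_mem_prefA e hi h1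
  ext m
  simp only [Dset, Set.mem_setOf_eq, Set.mem_singleton_iff]
  constructor
  · rintro ⟨hm, hmne⟩
    by_contra h
    exact hmne (heqA m h)
  · rintro rfl
    exact ⟨le_of_lt hi, hne⟩

lemma swap_of_Dset {k : ℕ} (hD : Dset e e' = {k}) :
    ∃ i : Fin (Fintype.card (JI L)), ∃ hi : (i : ℕ) + 1 < Fintype.card (JI L),
      e' i = e ⟨(i : ℕ) + 1, hi⟩ ∧ e' ⟨(i : ℕ) + 1, hi⟩ = e i ∧
      ∀ j, j ≠ i → j ≠ ⟨(i : ℕ) + 1, hi⟩ → e' j = e j := by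
  have hkmem : k ∈ Dset e e' := by rw [hD]; exact rfl
  obtain ⟨hkn, hkne⟩ := hkmem
  have hAeq : ∀ j : ℕ, j ≤ Fintype.card (JI L) → j ≠ k → prefA e j = prefA e' j := by
    intro j hj hjk
    by_contra h
    exact hjk (by simpa [hD] using (show j ∈ Dset e e' from ⟨hj, h⟩))
  have hk0 : k ≠ 0 := by
    rintro rfl
    exact hkne (by rw [prefA_zero, prefA_zero])
  have hkn' : k ≠ Fintype.card (JI L) := by
    rintro rfl
    exact hkne (by rw [prefA_card, prefA_card])
  obtain ⟨m, rfl⟩ : ∃ m, k = m + 1 := ⟨k - 1, by omega⟩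
  have hklt : m + 1 < Fintype.card (JI L) := lt_of_le_of_ne hkn hkn'
  have hm : m < Fintype.card (JI L) := by omega
  refine ⟨⟨m, hm⟩, hklt, ?_⟩
  have hS' : prefA e' m = prefA e m := (hAeq m (by omega) (by omega)).symm
  have hPk : prefA e (m + 1) = insert (e ⟨m, hm⟩) (prefA e m) := prefA_succ e hm
  have hQk : prefA e' (m + 1) = insert (e' ⟨m, hm⟩) (prefA e m) := by
    rw [prefA_succ e' hm, hS']
  have hP2 : prefA e (m + 1 + 1) = insert (e ⟨m + 1, hklt⟩) (prefA e (m + 1)) :=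
    prefA_succ e hklt
  have hQ2 : prefA e' (m + 1 + 1) = insert (e' ⟨m + 1, hklt⟩) (prefA e' (m + 1)) :=
    prefA_succ e' hklt
  have hA1 : prefA e (m + 1 + 1) = prefA e' (m + 1 + 1) := hAeq (m + 1 + 1) (by omega) (by omega)
  have hPS : e ⟨m, hm⟩ ∉ prefA e m := not_mem_prefA e hm
  have hQS : e' ⟨m, hm⟩ ∉ prefA e m := hS' ▸ not_mem_prefA e' hm
  have hP2k : e ⟨m + 1, hklt⟩ ∉ prefA e (m + 1) := not_mem_prefA e hklt
  have hQ2k : e' ⟨m + 1, hklt⟩ ∉ prefA e' (m + 1) := not_mem_prefA e' hklt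
  have hPQ : e ⟨m, hm⟩ ≠ e' ⟨m, hm⟩ := fun h => hkne (by rw [hPk, hQk, h])
  have hEq : insert (e ⟨m + 1, hklt⟩) (insert (e ⟨m, hm⟩) (prefA e m))
      = insert (e' ⟨m + 1, hklt⟩) (insert (e' ⟨m, hm⟩) (prefA e m)) := by
    rw [← hPk, ← hP2, hA1, hQ2, hQk]
  have hg1 : e' ⟨m, hm⟩ = e ⟨m + 1, hklt⟩ := by
    have hmem : e' ⟨m, hm⟩ ∈ insert (e ⟨m + 1, hklt⟩) (insert (e ⟨m, hm⟩) (prefA e m)) := by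
      rw [hEq]
      exact Set.mem_insert_iff.2 (Or.inr (Set.mem_insert _ _))
    simp only [Set.mem_insert_iff] at hmem
    rcases hmem with h | h | h
    · exact h
    · exact absurd h hPQ.symm
    · exact absurd h hQS
  have hg2 : e' ⟨m + 1, hklt⟩ = e ⟨m, hm⟩ := by
    have hmem : e' ⟨m + 1, hklt⟩ ∈ insert (e ⟨m + 1, hklt⟩) (insert (e ⟨m, hm⟩) (prefA e m)) := by
      rw [hEq]
      exact Set.mem_insert _ _
    simp only [Set.mem_insert_iff] at hmem
    rcases hmem with h | h | h
    · exfalso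
      apply hQ2k
      rw [h, ← hg1, hQk]
      exact Set.mem_insert _ _
    · exact h
    · exfalso
      apply hQ2k
      rw [hQk]
      exact Set.mem_insert_iff.2 (Or.inr (hS'.symm ▸ h))
  refine ⟨hg1, hg2, ?_⟩
  intro j hji hji1
  have hjv : (j : ℕ) ≠ m := fun h => hji (Fin.ext h)
  have hjv1 : (j : ℕ) ≠ m + 1 := fun h => hji1 (Fin.ext h)
  have hj1 : prefA e (j : ℕ) = prefA e' (j : ℕ) := hAeq j (le_of_lt j.2) hjv1
  have hj2 : prefA e ((j : ℕ) + 1) = prefA e' ((j : ℕ) + 1) := by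
    apply hAeq
    · have := j.2; omega
    · omega
  have hsucc := prefA_succ e j.2
  have hsucc' := prefA_succ e' j.2
  simp only [Fin.eta] at hsucc hsucc'
  have hmem : e' j ∈ prefA e' ((j : ℕ) + 1) := by
    show (e'.symm (e' j) : ℕ) < (j : ℕ) + 1
    simp
  rw [← hj2, hsucc] at hmem
  have hnotmem : e' j ∉ prefA e (j : ℕ) := by
    rw [hj1]
    show ¬ (e'.symm (e' j) : ℕ) < (j : ℕ)
    simp
  rcases hmem with h | h
  · exact h
  · exact absurd h hnotmem

end Swap

section Diamond
variable {L : Type*} [DistribLattice L] [Fintype L] [OrderBot L]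

lemma diamond_core {x y : L} {P Q : JI L} {S : Set (JI L)}
    (hx : bIdealSet x = insert P S) (hy : bIdealSet y = insert Q S)
    (hP : P ∉ S) (hQ : Q ∉ S) (hPQ : P ≠ Q) :
    x ⋖ x ⊔ y ∧ y ⋖ x ⊔ y ∧ x ⊓ y ⋖ x ∧ x ⊓ y ⋖ y := by
  have hinf : bIdealSet (x ⊓ y) = S := by
    rw [bIdeal_inf, hx, hy]
    ext p
    simp only [Set.mem_inter_iff, Set.mem_insert_iff]
    constructor
    · rintro ⟨rfl | hp, h' | h'⟩
      · exact absurd h' hPQ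
      · exact absurd h' hP
      · exact hp
      · exact hp
    · intro hp
      exact ⟨Or.inr hp, Or.inr hp⟩
  have hsupx : bIdealSet (x ⊔ y) = insert Q (bIdealSet x) := by
    rw [bIdeal_sup, hx, hy]
    ext p
    simp only [Set.mem_union, Set.mem_insert_iff]
    tauto
  have hsupy : bIdealSet (x ⊔ y) = insert P (bIdealSet y) := by
    rw [bIdeal_sup, hx, hy]
    ext p
    simp only [Set.mem_union, Set.mem_insert_iff]
    tauto
  have hQx : Q ∉ bIdealSet x := by
    rw [hx]
    rintro (h | h)
    · exact hPQ h.symm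
    · exact hQ h
  have hPy : P ∉ bIdealSet y := by
    rw [hy]
    rintro (h | h)
    · exact hPQ h
    · exact hP h
  refine ⟨covby_of_bIdeal hQx hsupx, covby_of_bIdeal hPy hsupy,
    covby_of_bIdeal (hinf ▸ hP) (by rw [hx, hinf]),
    covby_of_bIdeal (hinf ▸ hQ) (by rw [hy, hinf])⟩

variable [DecidablePred (SupIrred : L → Prop)]
  {slt slt' : JI L → JI L → Prop}
  (h1 : IsStrictTotalOrder (JI L) slt) (h1' : ∀ p q : JI L, p < q → slt p q)
  (h2 : IsStrictTotalOrder (JI L) slt') (h2' : ∀ p q : JI L, p < q → slt' p q)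
  (e e' : Fin (Fintype.card (JI L)) ≃ JI L)
  (he : ∀ i j, i < j → slt (e i) (e j))
  (he' : ∀ i j, i < j → slt' (e' i) (e' j))

include h1 h1' he h2 h2' he' in
lemma symmDiff_chain_eq :
    symmDiff (chainOf slt) (chainOf slt') = prefC e '' Dset e e' ∪ prefC e' '' Dset e e' := by
  have hCC' : chainOf slt \ chainOf slt' = prefC e '' Dset e e' := by
    rw [chainOf_eq h1 h1' e he, chainOf_eq h2 h2' e' he']
    ext x
    constructor
    · rintro ⟨⟨i, hi, rfl⟩, hx'⟩
      refine ⟨i, ⟨hi, fun hA => hx' ⟨i, hi, ?_⟩⟩, rfl⟩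
      exact (bIdeal_inj (by rw [bIdeal_prefC h2 h2' e' he', bIdeal_prefC h1 h1' e he, hA])).symm
    · rintro ⟨i, ⟨hi, hA⟩, rfl⟩
      refine ⟨⟨i, hi, rfl⟩, ?_⟩
      rintro ⟨j, hj, hxj⟩
      obtain ⟨rfl, hA'⟩ := prefC_eq_iff h1 h1' h2 h2' e e' he he' hi hj hxj.symm
      exact hA hA'
  have hC'C : chainOf slt' \ chainOf slt = prefC e' '' Dset e e' := by
    rw [chainOf_eq h1 h1' e he, chainOf_eq h2 h2' e' he']
    ext x
    constructor
    · rintro ⟨⟨i, hi, rfl⟩, hx'⟩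
      refine ⟨i, ⟨hi, fun hA => hx' ⟨i, hi, ?_⟩⟩, rfl⟩
      exact (bIdeal_inj (by rw [bIdeal_prefC h1 h1' e he, bIdeal_prefC h2 h2' e' he', hA])).symm
    · rintro ⟨i, ⟨hi, hA⟩, rfl⟩
      refine ⟨⟨i, hi, rfl⟩, ?_⟩
      rintro ⟨j, hj, hxj⟩
      obtain ⟨rfl, hA'⟩ := prefC_eq_iff h2 h2' h1 h1' e' e he' he hi hj hxj.symm
      exact hA hA'.symm
  rw [Set.symmDiff_def, hCC', hC'C]

end Diamond

/-- For two linearizations `≺`, `≺'` of the order on the join-irreducibles of a finite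
distributive lattice `L`, the maximal chains `C_≺`, `C_≺'` have symmetric difference of
size two iff the corresponding enumerations differ by exchanging two consecutive
elements; and when the symmetric difference is `{a, b}`, `{a,b}` is a diamond pair:
`a ∨ b` covers both `a` and `b`, and both cover `a ∧ b`. -/
theorem stmt12 {L : Type*} [DistribLattice L] [Fintype L] [OrderBot L]
    [DecidablePred (SupIrred : L → Prop)]
    (slt slt' : JI L → JI L → Prop)
    (h1 : IsStrictTotalOrder (JI L) slt) (h1' : ∀ p q : JI L, p < q → slt p q)
    (h2 : IsStrictTotalOrder (JI L) slt') (h2' : ∀ p q : JI L, p < q → slt' p q)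
    (e e' : Fin (Fintype.card (JI L)) ≃ JI L)
    (he : ∀ i j, i < j → slt (e i) (e j))
    (he' : ∀ i j, i < j → slt' (e' i) (e' j)) :
    ((symmDiff (chainOf slt) (chainOf slt')).ncard = 2 ↔
      ∃ i : Fin (Fintype.card (JI L)), ∃ hi : (i : ℕ) + 1 < Fintype.card (JI L),
        e' i = e ⟨(i : ℕ) + 1, hi⟩ ∧ e' ⟨(i : ℕ) + 1, hi⟩ = e i ∧
        ∀ j, j ≠ i → j ≠ ⟨(i : ℕ) + 1, hi⟩ → e' j = e j) ∧
    ∀ a b : L, a ≠ b → symmDiff (chainOf slt) (chainOf slt') = {a, b} →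
      a ⋖ a ⊔ b ∧ b ⋖ a ⊔ b ∧ a ⊓ b ⋖ a ∧ a ⊓ b ⋖ b := by
  constructor
  · constructor
    · intro h
      rw [ncard_symmDiff_two h1 h1' h2 h2' e e' he he'] at h
      obtain ⟨k, hk⟩ := Set.ncard_eq_one.1 (by omega : (Dset e e').ncard = 1)
      exact swap_of_Dset e e' hk
    · rintro ⟨i, hi, hs1, hs2, hrest⟩
      rw [ncard_symmDiff_two h1 h1' h2 h2' e e' he he',
        Dset_of_swap e e' i hi hs1 hs2 hrest, Set.ncard_singleton]
  · intro a b hab hsd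
    have hcard : (symmDiff (chainOf slt) (chainOf slt')).ncard = 2 := by
      rw [hsd]; exact Set.ncard_pair hab
    rw [ncard_symmDiff_two h1 h1' h2 h2' e e' he he'] at hcard
    obtain ⟨k, hk⟩ := Set.ncard_eq_one.1 (by omega : (Dset e e').ncard = 1)
    have hkmem : k ∈ Dset e e' := by rw [hk]; exact rfl
    obtain ⟨hkn, hkne⟩ := hkmem
    have hAeq : ∀ j : ℕ, j ≤ Fintype.card (JI L) → j ≠ k → prefA e j = prefA e' j := by
      intro j hj hjk
      by_contra h
      exact hjk (by simpa [hk] using (show j ∈ Dset e e' from ⟨hj, h⟩))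
    have hk0 : k ≠ 0 := by
      rintro rfl
      exact hkne (by rw [prefA_zero, prefA_zero])
    obtain ⟨m, rfl⟩ : ∃ m, k = m + 1 := ⟨k - 1, by omega⟩
    have hm : m < Fintype.card (JI L) := by omega
    have hS' : prefA e' m = prefA e m := (hAeq m (by omega) (by omega)).symm
    have hPk : bIdealSet (prefC e (m + 1)) = insert (e ⟨m, hm⟩) (prefA e m) := by
      rw [bIdeal_prefC h1 h1' e he]; exact prefA_succ e hm
    have hQk : bIdealSet (prefC e' (m + 1)) = insert (e' ⟨m, hm⟩) (prefA e m) := by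
      rw [bIdeal_prefC h2 h2' e' he', prefA_succ e' hm, hS']
    have hPS : e ⟨m, hm⟩ ∉ prefA e m := not_mem_prefA e hm
    have hQS : e' ⟨m, hm⟩ ∉ prefA e m := hS' ▸ not_mem_prefA e' hm
    have hPQ : e ⟨m, hm⟩ ≠ e' ⟨m, hm⟩ := by
      intro h
      exact hkne (by rw [prefA_succ e hm, prefA_succ e' hm, hS', h])
    have hdiam := diamond_core hPk hQk hPS hQS hPQ
    have hpair : ({a, b} : Set L) = {prefC e (m + 1), prefC e' (m + 1)} := by
      rw [← hsd, symmDiff_chain_eq h1 h1' h2 h2' e e' he he', hk]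
      simp [Set.image_singleton, Set.union_comm, Set.pair_comm]
    rcases Set.pair_eq_pair_iff.1 hpair with ⟨rfl, rfl⟩ | ⟨rfl, rfl⟩
    · exact hdiam
    · obtain ⟨c1, c2, c3, c4⟩ := hdiam
      rw [sup_comm] at c1 c2
      rw [inf_comm] at c3 c4
      exact ⟨c2, c1, c4, c3⟩
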